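/- For every α > 1 there exists a finite constant K such that the Cauchy-type density f_α satisfies (f_α * f_α)(x) ≤ K · f_α(x) for every x ∈ ℝ. -/

import Mathlib

open Real MeasureTheory

/-- The Cauchy-type probability density `f_α(y) = r_α / (1 + |y|^α)` on `ℝ`, where
`r_α = (∫ dy/(1+|y|^α))⁻¹` is the normalizing constant. -/
noncomputable def cauchyType (α : ℝ) (y : ℝ) : ℝ :=
  (∫ z : ℝ, (1 + |z| ^ α)⁻¹)⁻¹ * (1 + |y| ^ α)⁻¹

/-- Real version of the mean inequality `(a+b)^p ≤ 2^(p-1) (a^p + b^p)`. -/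
lemma real_rpow_add_le {a b p : ℝ} (ha : 0 ≤ a) (hb : 0 ≤ b) (hp : 1 ≤ p) :
    (a + b) ^ p ≤ 2 ^ (p - 1) * (a ^ p + b ^ p) := by
  have h := NNReal.rpow_add_le_mul_rpow_add_rpow a.toNNReal b.toNNReal hp
  have h2 := (NNReal.coe_le_coe).2 h
  push_cast [NNReal.coe_rpow] at h2
  rwa [Real.coe_toNNReal a ha, Real.coe_toNNReal b hb] at h2

lemma g_measurable (α : ℝ) : Measurable (fun y : ℝ => (1 + |y| ^ α)⁻¹) := by
  fun_prop

lemma one_le_g_den (α : ℝ) (y : ℝ) : (1 : ℝ) ≤ 1 + |y| ^ α :=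
  le_add_of_nonneg_right (Real.rpow_nonneg (abs_nonneg y) α)

lemma g_den_pos (α : ℝ) (y : ℝ) : (0 : ℝ) < 1 + |y| ^ α :=
  lt_of_lt_of_le one_pos (one_le_g_den α y)

lemma g_nonneg (α : ℝ) (y : ℝ) : (0 : ℝ) ≤ (1 + |y| ^ α)⁻¹ :=
  inv_nonneg.2 (g_den_pos α y).le

/-- Integrability of `(1+|y|^α)⁻¹` for `α > 1`. -/
lemma g_integrable (α : ℝ) (hα : 1 < α) :
    Integrable (fun y : ℝ => (1 + |y| ^ α)⁻¹) := by
  have hdim : ((Module.finrank ℝ ℝ : ℝ)) < α := by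
    have h1 : Module.finrank ℝ ℝ = 1 := Module.finrank_self ℝ
    rw [h1]; exact_mod_cast hα
  have hbase : Integrable (fun y : ℝ => (1 + ‖y‖) ^ (-α)) :=
    integrable_one_add_norm hdim
  refine (hbase.const_mul ((2 : ℝ) ^ (α - 1))).mono' ((g_measurable α).aestronglyMeasurable)
    (Filter.Eventually.of_forall fun y => ?_)
  have key : (1 + |y|) ^ α ≤ 2 ^ (α - 1) * (1 + |y| ^ α) := by
    have h := real_rpow_add_le zero_le_one (abs_nonneg y) hα.le
    simpa [Real.one_rpow] using h
  have h1y : (0 : ℝ) < 1 + |y| := by positivity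
  have hpow : (0 : ℝ) < (1 + |y|) ^ α := Real.rpow_pos_of_pos h1y α
  rw [Real.norm_eq_abs, abs_of_nonneg (g_nonneg α y), Real.norm_eq_abs,
    Real.rpow_neg h1y.le, ← div_eq_mul_inv, le_div_iff₀ hpow]
  calc (1 + |y| ^ α)⁻¹ * (1 + |y|) ^ α
      ≤ (1 + |y| ^ α)⁻¹ * (2 ^ (α - 1) * (1 + |y| ^ α)) :=
        mul_le_mul_of_nonneg_left key (g_nonneg α y)
    _ = 2 ^ (α - 1) := by
        field_simp

/-- For every `α > 1` there is a finite constant `K` with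
`(f_α * f_α)(x) ≤ K · f_α(x)` for all `x ∈ ℝ`. -/
theorem statement_10 (α : ℝ) (hα : 1 < α) :
    ∃ K : ℝ, ∀ x : ℝ,
      (∫ y : ℝ, cauchyType α y * cauchyType α (x - y)) ≤ K * cauchyType α x := by
  set g : ℝ → ℝ := fun y => (1 + |y| ^ α)⁻¹ with hg
  set c : ℝ := ∫ z : ℝ, (1 + |z| ^ α)⁻¹ with hc
  have hgi : Integrable g := g_integrable α hα
  have hcpos : 0 < c := by
    rw [hc]
    rw [integral_pos_iff_support_of_nonneg (fun y => g_nonneg α y) hgi]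
    have : Function.support (fun y : ℝ => (1 + |y| ^ α)⁻¹) = Set.univ := by
      ext y
      simp only [Function.mem_support, ne_eq, inv_eq_zero, Set.mem_univ, iff_true]
      exact (g_den_pos α y).ne'
    rw [this]
    simp
  set r : ℝ := c⁻¹ with hr
  have hrpos : 0 < r := inv_pos.2 hcpos
  refine ⟨2 ^ α, fun x => ?_⟩
  -- pointwise bound on the integrand
  have hgix : Integrable (fun y => g (x - y)) := hgi.comp_sub_left x
  have hMi : Integrable (fun y => r ^ 2 * (2 ^ (α - 1) * g x * (g y + g (x - y)))) :=
    ((hgi.add hgix).const_mul _).const_mul _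
  have hbound : ∀ y : ℝ,
      cauchyType α y * cauchyType α (x - y)
        ≤ r ^ 2 * (2 ^ (α - 1) * g x * (g y + g (x - y))) := by
    intro y
    have hA := g_den_pos α y
    have hB := g_den_pos α (x - y)
    have hC := g_den_pos α x
    have habs : |x| ≤ |y| + |x - y| := by
      have : x = y + (x - y) := by ring
      calc |x| = |y + (x - y)| := by rw [← this]
        _ ≤ |y| + |x - y| := abs_add_le _ _
    have hmono : |x| ^ α ≤ (|y| + |x - y|) ^ α :=
      Real.rpow_le_rpow (abs_nonneg x) habs (by linarith)
    have hsplit : (|y| + |x - y|) ^ α ≤ 2 ^ (α - 1) * (|y| ^ α + |x - y| ^ α) :=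
      real_rpow_add_le (abs_nonneg y) (abs_nonneg (x - y)) hα.le
    have h2 : (1 : ℝ) ≤ 2 ^ (α - 1) := by
      calc (1 : ℝ) = 2 ^ (0 : ℝ) := (Real.rpow_zero 2).symm
        _ ≤ 2 ^ (α - 1) := Real.rpow_le_rpow_of_exponent_le (by norm_num) (by linarith)
    have hkey : 1 + |x| ^ α ≤ 2 ^ (α - 1) * ((1 + |y| ^ α) + (1 + |x - y| ^ α)) := by
      have : 2 ^ (α - 1) * ((1 + |y| ^ α) + (1 + |x - y| ^ α))
          = 2 ^ (α - 1) * 2 + 2 ^ (α - 1) * (|y| ^ α + |x - y| ^ α) := by ring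
      rw [this]
      have h1 : (1 : ℝ) ≤ 2 ^ (α - 1) * 2 := by nlinarith
      nlinarith
    -- reduce to `hkey`
    have lhs_eq : cauchyType α y * cauchyType α (x - y)
        = r ^ 2 * ((1 + |y| ^ α)⁻¹ * (1 + |x - y| ^ α)⁻¹) := by
      simp only [cauchyType, ← hc, ← hr]; ring
    have rhs_eq : r ^ 2 * (2 ^ (α - 1) * g x * (g y + g (x - y)))
        = r ^ 2 * (2 ^ (α - 1) * (1 + |x| ^ α)⁻¹
            * (((1 + |y| ^ α) + (1 + |x - y| ^ α))
              * ((1 + |y| ^ α)⁻¹ * (1 + |x - y| ^ α)⁻¹))) := by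
      have hAne := hA.ne'
      have hBne := hB.ne'
      have hsum : (1 + |y| ^ α)⁻¹ + (1 + |x - y| ^ α)⁻¹
          = ((1 + |y| ^ α) + (1 + |x - y| ^ α))
            * ((1 + |y| ^ α)⁻¹ * (1 + |x - y| ^ α)⁻¹) := by
        field_simp
        ring
      simp only [hg]
      rw [hsum]
      try ring
    rw [lhs_eq, rhs_eq]
    have hfrac : (1 : ℝ) ≤ 2 ^ (α - 1) * (1 + |x| ^ α)⁻¹
        * ((1 + |y| ^ α) + (1 + |x - y| ^ α)) := by
      rw [mul_assoc, mul_comm ((1 + |x| ^ α)⁻¹), ← mul_assoc, ← div_eq_mul_inv,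
        le_div_iff₀ hC, one_mul]
      exact hkey
    have hprod : (0 : ℝ) ≤ (1 + |y| ^ α)⁻¹ * (1 + |x - y| ^ α)⁻¹ :=
      mul_nonneg (g_nonneg α y) (g_nonneg α (x - y))
    have : (1 + |y| ^ α)⁻¹ * (1 + |x - y| ^ α)⁻¹
        ≤ (2 ^ (α - 1) * (1 + |x| ^ α)⁻¹ * ((1 + |y| ^ α) + (1 + |x - y| ^ α)))
          * ((1 + |y| ^ α)⁻¹ * (1 + |x - y| ^ α)⁻¹) := by
      nlinarith
    calc r ^ 2 * ((1 + |y| ^ α)⁻¹ * (1 + |x - y| ^ α)⁻¹)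
        ≤ r ^ 2 * ((2 ^ (α - 1) * (1 + |x| ^ α)⁻¹ * ((1 + |y| ^ α) + (1 + |x - y| ^ α)))
          * ((1 + |y| ^ α)⁻¹ * (1 + |x - y| ^ α)⁻¹)) :=
          mul_le_mul_of_nonneg_left this (sq_nonneg r)
      _ = r ^ 2 * (2 ^ (α - 1) * (1 + |x| ^ α)⁻¹
            * (((1 + |y| ^ α) + (1 + |x - y| ^ α))
              * ((1 + |y| ^ α)⁻¹ * (1 + |x - y| ^ α)⁻¹))) := by ring
  have hnn : ∀ y : ℝ, 0 ≤ cauchyType α y * cauchyType α (x - y) := by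
    intro y
    have : 0 ≤ cauchyType α y := by
      simp only [cauchyType, ← hc, ← hr]
      exact mul_nonneg hrpos.le (g_nonneg α y)
    have h2 : 0 ≤ cauchyType α (x - y) := by
      simp only [cauchyType, ← hc, ← hr]
      exact mul_nonneg hrpos.le (g_nonneg α (x - y))
    exact mul_nonneg this h2
  have hstep : (∫ y : ℝ, cauchyType α y * cauchyType α (x - y))
      ≤ ∫ y : ℝ, r ^ 2 * (2 ^ (α - 1) * g x * (g y + g (x - y))) :=
    integral_mono_of_nonneg (Filter.Eventually.of_forall hnn) hMi
      (Filter.Eventually.of_forall hbound)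
  have hshift : (∫ y : ℝ, g (x - y)) = c := integral_sub_left_eq_self g volume x
  have hval : (∫ y : ℝ, r ^ 2 * (2 ^ (α - 1) * g x * (g y + g (x - y))))
      = r ^ 2 * (2 ^ (α - 1) * g x * (2 * c)) := by
    rw [integral_const_mul, integral_const_mul, integral_add hgi hgix, hshift]
    rw [← hc]
    ring
  have hKval : r ^ 2 * (2 ^ (α - 1) * g x * (2 * c)) = 2 ^ α * cauchyType α x := by
    have hrc : r * c = 1 := inv_mul_cancel₀ (ne_of_gt hcpos)
    have h2a : (2 : ℝ) ^ (α - 1) * 2 = 2 ^ α := by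
      have h := Real.rpow_add_one (by norm_num : (2:ℝ) ≠ 0) (α - 1)
      rw [show α - 1 + 1 = α by ring] at h
      exact h.symm
    simp only [cauchyType, ← hc, ← hr, hg]
    calc r ^ 2 * (2 ^ (α - 1) * (1 + |x| ^ α)⁻¹ * (2 * c))
        = (2 ^ (α - 1) * 2) * (r * (1 + |x| ^ α)⁻¹) * (r * c) := by ring
      _ = 2 ^ α * (r * (1 + |x| ^ α)⁻¹) := by rw [hrc, h2a]; ring
  exact hstep.trans (le_of_eq (hval.trans hKval))
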